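/- Let 𝔽_q be a finite field with q elements, k ≥ 1, n = q^k − 1, and let g⊥(x) ∈ 𝔽_q[x] be a monic irreducible polynomial of degree k dividing x^n − 1. Let w = (w_1,…,w_n) ∈ 𝔽_q^n be the word with g(x) := (x^n−1)/g⊥(x) = Σ_{j=1}^{n} w_j x^{j−1}. Then g⊥ is primitive (the image of x in 𝔽_q[x]/(g⊥(x)) has multiplicative order n) if and only if every nonzero vector v = (v_1,…,v_k) ∈ 𝔽_q^k occurs exactly once as a cyclic consecutive subsequence of w, i.e., for each nonzero v ∈ 𝔽_q^k there is exactly one i ∈ {0,1,…,n−1} such that w_{i+j} = v_j for all j = 1,…,k, where subscripts of w are taken modulo n (with representatives in {1,…,n}). -/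

import Mathlib

/-- The (leftward) cyclic shift on words of length `n`:
`c(w₁,…,wₙ) = (w₂,…,wₙ,w₁)`. -/
def cshift {A : Type*} {n : ℕ} (w : Fin n → A) : Fin n → A :=
  fun i => w ⟨((i : ℕ) + 1) % n, Nat.mod_lt _ i.pos⟩

/-- The major index of a word: `maj w = Σ_{1 ≤ i ≤ n-1, w_i > w_{i+1}} i`
(here positions are 0-indexed, so position `i : Fin n` is the `(i+1)`-st letter). -/
def majIdx {A : Type*} [LinearOrder A] {n : ℕ} (w : Fin n → A) : ℕ :=
  ∑ i : Fin n,
    if h : (i : ℕ) + 1 < n then (if w ⟨(i : ℕ) + 1, h⟩ < w i then (i : ℕ) + 1 else 0) else 0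

/-- The number of cyclic descents of a word, `cdes w = #{i : w_i > w_{i+1}}`
with indices read cyclically (`w_{n+1} := w_1`). -/
def cdes {A : Type*} [LinearOrder A] {n : ℕ} (w : Fin n → A) : ℕ :=
  (Finset.univ.filter fun i : Fin n =>
    w ⟨((i : ℕ) + 1) % n, Nat.mod_lt _ i.pos⟩ < w i).card

/-- The inversion number of a word: `inv w = #{(i,j) : i < j, w_i > w_j}`. -/
def invNum {A : Type*} [LinearOrder A] {n : ℕ} (w : Fin n → A) : ℕ :=
  (Finset.univ.filter fun p : Fin n × Fin n => p.1 < p.2 ∧ w p.2 < w p.1).card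

/-- The Hamming weight of a binary word: the number of ones. -/
def wt {n : ℕ} (w : Fin n → Bool) : ℕ :=
  (Finset.univ.filter fun i => w i = true).card

/-- The triple `(X, Σ_{x ∈ X} t^{stat x}, C)` exhibits the cyclic sieving phenomenon,
where `C` is the cyclic group of order `n` generated by the cyclic shift `c` acting on `X`:
for every `d`, the number of fixed points of `c^d` on `X` equals the evaluation of
`Σ_{x ∈ X} t^{stat x}` at `t = ζ^d`, with `ζ = exp(2πi/n)`. -/
def exhibitsCSP {A : Type*} [DecidableEq A] {n : ℕ} (X : Finset (Fin n → A))
    (stat : (Fin n → A) → ℕ) : Prop :=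
  ∀ d : ℕ,
    ((X.filter fun v => cshift^[d] v = v).card : ℂ) =
      ∑ v ∈ X, Complex.exp (2 * (Real.pi : ℂ) * Complex.I / n) ^ (d * stat v)

/-- The polynomial `w₁ + w₂ x + ⋯ + wₙ x^{n-1}` associated to a word `w ∈ F^n` under
the standard identification of `F^n` with `F[x]/(xⁿ-1)`.  A word `w` belongs to the
cyclic code generated by a monic divisor `g` of `xⁿ - 1` exactly when `g ∣ wordPoly w`. -/
noncomputable def wordPoly {F : Type*} [CommRing F] {n : ℕ} (w : Fin n → F) :
    Polynomial F :=
  ∑ i : Fin n, Polynomial.C (w i) * Polynomial.X ^ (i : ℕ)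

open Polynomial in
private lemma coeff_mul_window {F : Type*} [CommRing F] (P Q : Polynomial F) (k M : ℕ)
    (hQ : Q.natDegree ≤ k) :
    (P * Q).coeff (M + k) =
      ∑ j ∈ Finset.range (k + 1), P.coeff (M + j) * Q.coeff (k - j) := by
  have h1 : ∑ i ∈ Finset.Ico 0 M, P.coeff i * Q.coeff (M + k - i) = 0 := by
    apply Finset.sum_eq_zero
    intro i hi
    simp only [Finset.mem_Ico] at hi
    have h0 : Q.coeff (M + k - i) = 0 :=
      Polynomial.coeff_eq_zero_of_natDegree_lt (by omega)
    rw [h0, mul_zero]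
  rw [Polynomial.coeff_mul, Finset.Nat.sum_antidiagonal_eq_sum_range_succ_mk]
  show ∑ i ∈ Finset.range (M + k + 1), P.coeff i * Q.coeff (M + k - i) = _
  calc ∑ i ∈ Finset.range (M + k + 1), P.coeff i * Q.coeff (M + k - i)
      = ∑ i ∈ Finset.Ico M (M + k + 1), P.coeff i * Q.coeff (M + k - i) := by
        rw [Finset.range_eq_Ico,
          ← Finset.sum_Ico_consecutive _ (Nat.zero_le M) (by omega : M ≤ M + k + 1),
          h1, zero_add]
    _ = ∑ j ∈ Finset.range (k + 1), P.coeff (M + j) * Q.coeff (M + k - (M + j)) := by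
        rw [Finset.sum_Ico_eq_sum_range, show M + k + 1 - M = k + 1 from by omega]
    _ = ∑ j ∈ Finset.range (k + 1), P.coeff (M + j) * Q.coeff (k - j) := by
        apply Finset.sum_congr rfl
        intro j hj
        simp only [Finset.mem_range] at hj
        congr 2
        omega


/-- with gperp monic irreducible of degree k dividing x^n - 1
(n = q^k - 1), g = (x^n - 1)/gperp, and w ∈ F_q^n the word with
g = Σ_{j=1}^n w_j x^{j-1} (i.e. w_i = coeff of x^{i} in g, 0-indexed), gperp is
primitive if and only if every nonzero vector v ∈ F_q^k occurs exactly once as a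
cyclic consecutive subsequence of w. -/
theorem stmt14 {F : Type*} [Field F] [Fintype F] (k : ℕ) (hk : 1 ≤ k)
    (n : ℕ) (hn : n = Fintype.card F ^ k - 1)
    (gperp : Polynomial F) (hmonic : gperp.Monic) (hirr : Irreducible gperp)
    (hdeg : gperp.natDegree = k) (hdvd : gperp ∣ Polynomial.X ^ n - 1)
    (g : Polynomial F) (hg : g * gperp = Polynomial.X ^ n - 1)
    (w : Fin n → F) (hw : ∀ i : Fin n, w i = g.coeff (i : ℕ)) :
    orderOf (AdjoinRoot.root gperp) = n ↔
      ∀ v : Fin k → F, v ≠ 0 →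
        ∃! i : Fin n, ∀ j : Fin k,
          w ⟨((i : ℕ) + (j : ℕ)) % n, Nat.mod_lt _ i.pos⟩ = v j := by
  classical
  -- basic numerology
  have hq : 1 < Fintype.card F := Fintype.one_lt_card
  have hqk : 2 ≤ Fintype.card F ^ k := by
    calc 2 = 2 ^ 1 := rfl
    _ ≤ 2 ^ k := Nat.pow_le_pow_right (by omega) hk
    _ ≤ Fintype.card F ^ k := Nat.pow_le_pow_left hq k
  have hn1 : 1 ≤ n := by omega
  have hkn : k ≤ n := by
    have h2k : k < 2 ^ k := Nat.lt_two_pow_self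
    have h2q : 2 ^ k ≤ Fintype.card F ^ k := Nat.pow_le_pow_left hq k
    omega
  have hgp0 : gperp ≠ 0 := hmonic.ne_zero
  have hdegXn : (Polynomial.X ^ n - 1 : Polynomial F).natDegree = n := by
    simpa using (Polynomial.natDegree_X_pow_sub_C (n := n) (r := (1 : F)))
  have hXn0 : (Polynomial.X ^ n - 1 : Polynomial F) ≠ 0 := by
    intro h
    have := congrArg (fun p : Polynomial F => p.coeff 0) h
    simp only [Polynomial.coeff_X_pow, Polynomial.coeff_sub, Polynomial.coeff_one,
      Polynomial.coeff_zero] at this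
    rw [if_neg (by omega : ¬ (0 = n)), zero_sub, neg_eq_zero] at this
    exact one_ne_zero this
  have hg0 : g ≠ 0 := by
    rintro rfl
    rw [zero_mul] at hg
    exact hXn0 hg.symm
  have hdegg : g.natDegree = n - k := by
    have h := Polynomial.natDegree_mul hg0 hgp0
    rw [hg, hdegXn, hdeg] at h
    omega
  have hc0 : gperp.coeff 0 ≠ 0 := by
    intro h0
    have he := congrArg (Polynomial.eval 0) hg
    rw [Polynomial.eval_mul,
      show Polynomial.eval 0 gperp = gperp.coeff 0 from
        (Polynomial.coeff_zero_eq_eval_zero gperp).symm, h0, mul_zero] at he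
    simp [zero_pow (by omega : n ≠ 0)] at he
  -- the field K = F[x]/(gperp)
  haveI : Fact (Irreducible gperp) := ⟨hirr⟩
  set α : AdjoinRoot gperp := AdjoinRoot.root gperp with hαdef
  have hαn : α ^ n = 1 := by
    have h1 : AdjoinRoot.mk gperp (Polynomial.X ^ n - 1) = 0 :=
      AdjoinRoot.mk_eq_zero.mpr hdvd
    rw [map_sub, map_pow, AdjoinRoot.mk_X, map_one, sub_eq_zero] at h1
    exact h1
  have hα0 : α ≠ 0 := by
    intro h
    rw [h, zero_pow (by omega : n ≠ 0)] at hαn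
    exact zero_ne_one hαn
  set β : AdjoinRoot gperp := α⁻¹ with hβdef
  have hβ0 : β ≠ 0 := inv_ne_zero hα0
  have hαβ : α * β = 1 := mul_inv_cancel₀ hα0
  have hβn : β ^ n = 1 := by
    rw [hβdef, inv_pow, hαn, inv_one]
  have hαβpow : ∀ i j : ℕ, α ^ i * β ^ (j + i) = β ^ j := by
    intro i j
    have h1 : α ^ i * β ^ i = 1 := by rw [← mul_pow, hαβ, one_pow]
    rw [pow_add, mul_comm (β ^ j), ← mul_assoc, h1, one_mul]
  have hordαβ : orderOf α = orderOf β := by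
    apply orderOf_eq_orderOf_iff.mpr
    intro m
    rw [hβdef, inv_pow, inv_eq_one]
  -- power basis in terms of β
  set pb := AdjoinRoot.powerBasis hgp0 with hpbdef
  have hgen : pb.gen = α := rfl
  have hdim : pb.dim = k := hdeg
  have hβαk : β ^ (k - 1) * α ^ (k - 1) = 1 := by
    rw [← mul_pow, mul_comm, hαβ, one_pow]
  have hαβk : α ^ (k - 1) * β ^ (k - 1) = 1 := by
    rw [← mul_pow, hαβ, one_pow]
  set e : AdjoinRoot gperp ≃ₗ[F] AdjoinRoot gperp := LinearEquiv.ofLinear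
      (LinearMap.mulLeft F (β ^ (k - 1))) (LinearMap.mulLeft F (α ^ (k - 1)))
      (by ext z
          show β ^ (k - 1) * (α ^ (k - 1) * z) = z
          rw [← mul_assoc, hβαk, one_mul])
      (by ext z
          show α ^ (k - 1) * (β ^ (k - 1) * z) = z
          rw [← mul_assoc, hαβk, one_mul]) with hedef
  have heapp : ∀ z, e z = β ^ (k - 1) * z := fun z => rfl
  set bβ : Module.Basis (Fin k) F (AdjoinRoot gperp) :=
    (((pb.basis.reindex (finCongr hdim)).reindex Fin.revPerm).map e) with hbβdef
  have hbβ : ∀ j : Fin k, bβ j = β ^ (j : ℕ) := by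
    intro j
    have hj : (j : ℕ) < k := j.isLt
    have h1 : bβ j = e (pb.basis ((finCongr hdim).symm (Fin.revPerm.symm j))) := by
      rw [hbβdef, Module.Basis.map_apply, Module.Basis.reindex_apply, Module.Basis.reindex_apply]
    rw [h1, PowerBasis.basis_eq_pow, hgen, heapp]
    have hval : (((finCongr hdim).symm (Fin.revPerm.symm j) : Fin pb.dim) : ℕ)
        = k - 1 - (j : ℕ) := by
      simp [Fin.val_rev]
      omega
    rw [hval, mul_comm]
    have h2 := hαβpow (k - 1 - (j : ℕ)) (j : ℕ)
    rw [show (j : ℕ) + (k - 1 - (j : ℕ)) = k - 1 from by omega] at h2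
    exact h2
  -- the linear functional φ
  set φ : AdjoinRoot gperp →ₗ[F] F :=
    bβ.constr F (fun j : Fin k => g.coeff (j : ℕ)) with hφdef
  have hφβ : ∀ j : Fin k, φ (β ^ (j : ℕ)) = g.coeff (j : ℕ) := by
    intro j
    rw [← hbβ j, hφdef]
    exact bβ.constr_basis F _ j
  -- the cyclic recurrence for the coefficients of g
  have hcoeffP : ∀ m : ℕ, (g * Polynomial.X ^ k).coeff m
      = if k ≤ m then g.coeff (m - k) else 0 :=
    fun m => Polynomial.coeff_mul_X_pow' g k m
  have hPgperp : (g * Polynomial.X ^ k) * gperp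
      = Polynomial.X ^ (n + k) - Polynomial.X ^ k := by
    rw [mul_right_comm, hg, sub_mul, one_mul, ← pow_add]
  have hA : ∀ M : ℕ, (Polynomial.X ^ (n + k) - Polynomial.X ^ k : Polynomial F).coeff (M + k)
      = ∑ j ∈ Finset.range (k + 1),
          (g * Polynomial.X ^ k).coeff (M + j) * gperp.coeff (k - j) := by
    intro M
    rw [← hPgperp]
    exact coeff_mul_window _ _ k M (le_of_eq hdeg)
  have hXXcoeff : ∀ m : ℕ,
      (Polynomial.X ^ (n + k) - Polynomial.X ^ k : Polynomial F).coeff m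
        = (if m = n + k then 1 else 0) - (if m = k then 1 else 0) := by
    intro m
    rw [Polynomial.coeff_sub, Polynomial.coeff_X_pow, Polynomial.coeff_X_pow]
  have hrec0 : ∀ t, t < n →
      ∑ j ∈ Finset.range (k + 1), g.coeff ((t + j) % n) * gperp.coeff (k - j) = 0 := by
    intro t ht
    by_cases hcase : t + k < n
    · have h2 : ∀ j ∈ Finset.range (k + 1),
          g.coeff ((t + j) % n) * gperp.coeff (k - j)
            = (g * Polynomial.X ^ k).coeff (t + k + j) * gperp.coeff (k - j) := by
        intro j hj
        simp only [Finset.mem_range] at hj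
        rw [hcoeffP, if_pos (by omega : k ≤ t + k + j),
          show t + k + j - k = t + j from by omega,
          Nat.mod_eq_of_lt (by omega : t + j < n)]
      rw [Finset.sum_congr rfl h2, ← hA (t + k), hXXcoeff,
        if_neg (by omega : ¬ (t + k + k = n + k)), if_neg (by omega : ¬ (t + k + k = k)),
        sub_zero]
    · -- wrap-around case
      have e1 := hA (t + k)
      have e2 := hA (t + k - n)
      rw [hXXcoeff] at e1 e2
      have hsum : ∑ j ∈ Finset.range (k + 1),
          ((g * Polynomial.X ^ k).coeff (t + k + j)
            + (g * Polynomial.X ^ k).coeff (t + k - n + j)) * gperp.coeff (k - j) = 0 := by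
        have hsplit : ∑ j ∈ Finset.range (k + 1),
            ((g * Polynomial.X ^ k).coeff (t + k + j)
              + (g * Polynomial.X ^ k).coeff (t + k - n + j)) * gperp.coeff (k - j)
            = ((if t + k + k = n + k then (1:F) else 0) - (if t + k + k = k then 1 else 0))
              + ((if t + k - n + k = n + k then (1:F) else 0)
                - (if t + k - n + k = k then 1 else 0)) := by
          simp_rw [add_mul]
          rw [Finset.sum_add_distrib, ← e1, ← e2]
        rw [hsplit,
          if_neg (by omega : ¬ (t + k + k = k)),
          if_neg (by omega : ¬ (t + k - n + k = n + k))]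
        by_cases hteq : t + k = n
        · rw [if_pos (by omega : t + k + k = n + k), if_pos (by omega : t + k - n + k = k)]
          ring
        · rw [if_neg (by omega : ¬ (t + k + k = n + k)),
            if_neg (by omega : ¬ (t + k - n + k = k))]
          ring
      have h2 : ∀ j ∈ Finset.range (k + 1),
          g.coeff ((t + j) % n) * gperp.coeff (k - j)
            = ((g * Polynomial.X ^ k).coeff (t + k + j)
              + (g * Polynomial.X ^ k).coeff (t + k - n + j)) * gperp.coeff (k - j) := by
        intro j hj
        simp only [Finset.mem_range] at hj
        rw [hcoeffP, hcoeffP]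
        by_cases hj2 : n ≤ t + j
        · rw [if_pos (by omega : k ≤ t + k + j), if_pos (by omega : k ≤ t + k - n + j)]
          rw [show t + k + j - k = t + j from by omega]
          rw [Polynomial.coeff_eq_zero_of_natDegree_lt
            (by omega : g.natDegree < t + j), zero_add]
          rw [show t + k - n + j - k = t + j - n from by omega]
          rw [Nat.mod_eq_sub_mod hj2, Nat.mod_eq_of_lt (by omega : t + j - n < n)]
        · rw [if_pos (by omega : k ≤ t + k + j), if_neg (by omega : ¬ (k ≤ t + k - n + j))]
          rw [show t + k + j - k = t + j from by omega, add_zero,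
            Nat.mod_eq_of_lt (by omega : t + j < n)]
      rw [Finset.sum_congr rfl h2, hsum]
  -- recurrence for the cyclic word
  have hrecw : ∀ m : ℕ,
      ∑ j ∈ Finset.range (k + 1), g.coeff ((m + j) % n) * gperp.coeff (k - j) = 0 := by
    intro m
    have h1 := hrec0 (m % n) (Nat.mod_lt _ (by omega : 0 < n))
    simp only [Nat.mod_add_mod] at h1
    exact h1
  -- recurrence for powers of β in K
  have haeval : ∑ j ∈ Finset.range (k + 1), gperp.coeff j • α ^ j = 0 := by
    have h0 : (Polynomial.aeval α) gperp = 0 := by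
      rw [hαdef, AdjoinRoot.aeval_eq, AdjoinRoot.mk_self]
    rw [Polynomial.aeval_eq_sum_range, hdeg] at h0
    exact h0
  have hrecβ : ∀ m : ℕ,
      ∑ j ∈ Finset.range (k + 1), gperp.coeff (k - j) • β ^ (m + j)
        = (0 : AdjoinRoot gperp) := by
    intro m
    have h1 : ∑ j ∈ Finset.range (k + 1), gperp.coeff j • (α ^ j * β ^ (m + k)) = 0 := by
      simp_rw [← smul_mul_assoc]
      rw [← Finset.sum_mul, haeval, zero_mul]
    have h2 : ∑ j ∈ Finset.range (k + 1), gperp.coeff j • β ^ (m + (k - j)) = 0 := by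
      rw [← h1]
      apply Finset.sum_congr rfl
      intro j hj
      simp only [Finset.mem_range] at hj
      congr 1
      have h3 := hαβpow j (m + (k - j))
      rw [show m + (k - j) + j = m + k from by omega] at h3
      exact h3.symm
    have h4 := Finset.sum_range_reflect
      (fun j => gperp.coeff j • β ^ (m + (k - j))) (k + 1)
    rw [h2] at h4
    rw [← h4]
    apply Finset.sum_congr rfl
    intro j hj
    simp only [Finset.mem_range] at hj
    rw [show k + 1 - 1 - j = k - j from by omega,
      show k - (k - j) = j from by omega]
  -- the key identity: the word is given by φ of powers of β
  have hmain : ∀ m : ℕ, g.coeff (m % n) = φ (β ^ m) := by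
    intro m
    induction m using Nat.strong_induction_on with
    | _ m ih =>
      by_cases hm : m < k
      · have h1 := hφβ ⟨m, hm⟩
        simp only [Fin.val_mk] at h1
        rw [h1, Nat.mod_eq_of_lt (by omega : m < n)]
      · set t := m - k with htdef
        have hmt : m = t + k := by omega
        have h1 := hrecw t
        have h2' := congrArg φ (hrecβ t)
        rw [map_sum, map_zero] at h2'
        simp only [map_smul, smul_eq_mul] at h2'
        rw [Finset.sum_range_succ] at h1 h2'
        have hIH : ∀ j ∈ Finset.range k,
            g.coeff ((t + j) % n) * gperp.coeff (k - j)
              = gperp.coeff (k - j) * φ (β ^ (t + j)) := by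
          intro j hj
          simp only [Finset.mem_range] at hj
          rw [ih (t + j) (by omega), mul_comm]
        rw [Finset.sum_congr rfl hIH] at h1
        rw [Nat.sub_self] at h1 h2'
        have h5 : g.coeff ((t + k) % n) * gperp.coeff 0
            = gperp.coeff 0 * φ (β ^ (t + k)) := by
          have h6 : ∑ j ∈ Finset.range k, gperp.coeff (k - j) * φ (β ^ (t + j))
              = -(g.coeff ((t + k) % n) * gperp.coeff 0) := by
            linear_combination h1
          rw [h6] at h2'
          linear_combination -h2'
        rw [hmt]
        have := mul_left_cancel₀ hc0 (by linear_combination h5 :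
          gperp.coeff 0 * g.coeff ((t + k) % n) = gperp.coeff 0 * φ (β ^ (t + k)))
        exact this
  -- a nonvanishing value of φ
  have hwit : φ (β ^ (n - k)) ≠ 0 := by
    rw [← hmain (n - k), Nat.mod_eq_of_lt (by omega : n - k < n), ← hdegg]
    exact Polynomial.leadingCoeff_ne_zero.mpr hg0
  -- injectivity of the window map
  have hker : ∀ z : AdjoinRoot gperp,
      (∀ j : Fin k, φ (β ^ (j : ℕ) * z) = 0) → z = 0 := by
    intro z hz
    by_contra hz0
    have hcomp : (φ.comp (LinearMap.mulRight F z)) = 0 := by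
      apply bβ.ext
      intro j
      rw [hbβ j]
      show φ (β ^ (j : ℕ) * z) = _
      rw [hz j]
      rfl
    have hall : ∀ y : AdjoinRoot gperp, φ (y * z) = 0 := by
      intro y
      have h := LinearMap.ext_iff.mp hcomp y
      simpa using h
    have h1 := hall ((β ^ (n - k)) * z⁻¹)
    rw [mul_assoc, inv_mul_cancel₀ hz0, mul_one] at h1
    exact hwit h1
  have hinj2 : ∀ z₁ z₂ : AdjoinRoot gperp,
      (∀ j : Fin k, φ (β ^ (j : ℕ) * z₁) = φ (β ^ (j : ℕ) * z₂)) → z₁ = z₂ := by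
    intro z₁ z₂ h
    have h1 := hker (z₁ - z₂) (fun j => by rw [mul_sub, map_sub, h j, sub_self])
    exact sub_eq_zero.mp h1
  -- the window map as a linear map, and its surjectivity
  set Ψ : AdjoinRoot gperp →ₗ[F] (Fin k → F) :=
    LinearMap.pi (fun j : Fin k => φ.comp (LinearMap.mulLeft F (β ^ (j : ℕ)))) with hΨdef
  have hΨapp : ∀ z (j : Fin k), Ψ z j = φ (β ^ (j : ℕ) * z) := fun z j => rfl
  have hΨinj : Function.Injective Ψ := by
    intro z₁ z₂ h
    apply hinj2
    intro j
    have := congrFun h j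
    rw [hΨapp, hΨapp] at this
    exact this
  haveI : FiniteDimensional F (AdjoinRoot gperp) := Module.Finite.of_basis bβ
  have hΨsurj : Function.Surjective Ψ := by
    have hfr : Module.finrank F (AdjoinRoot gperp) = Module.finrank F (Fin k → F) := by
      rw [Module.finrank_eq_card_basis bβ, Module.finrank_pi, Fintype.card_fin]
    exact (LinearMap.injective_iff_surjective_of_finrank_eq_finrank hfr).mp hΨinj
  -- cardinalities
  haveI : Fintype (AdjoinRoot gperp) := Module.fintypeOfFintype bβ
  have hcardK : Fintype.card (AdjoinRoot gperp) = Fintype.card F ^ k := by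
    rw [Module.card_fintype bβ, Fintype.card_fin]
  have hcardKx : Fintype.card (AdjoinRoot gperp)ˣ = n := by
    rw [Fintype.card_units, hcardK]
    omega
  -- bridging: the window condition in terms of φ
  have hwin_iff : ∀ (i : Fin n) (v : Fin k → F),
      (∀ j : Fin k, w ⟨((i : ℕ) + (j : ℕ)) % n, Nat.mod_lt _ i.pos⟩ = v j) ↔
        ∀ j : Fin k, φ (β ^ (j : ℕ) * β ^ (i : ℕ)) = v j := by
    intro i v
    apply forall_congr'
    intro j
    rw [hw ⟨((i : ℕ) + (j : ℕ)) % n, Nat.mod_lt _ i.pos⟩]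
    have h1 : φ (β ^ (j : ℕ) * β ^ (i : ℕ)) = φ (β ^ ((i : ℕ) + (j : ℕ))) := by
      rw [← pow_add, Nat.add_comm]
    rw [h1, ← hmain ((i : ℕ) + (j : ℕ))]
  -- uniqueness helper (assuming primitivity)
  have huniq : ∀ (v : Fin k → F) (i₁ i₂ : Fin n), orderOf α = n →
      (∀ j : Fin k, φ (β ^ (j : ℕ) * β ^ ((i₁ : ℕ))) = v j) →
      (∀ j : Fin k, φ (β ^ (j : ℕ) * β ^ ((i₂ : ℕ))) = v j) → i₁ = i₂ := by
    intro v i₁ i₂ hord h1 h2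
    have hββ : β ^ (i₁ : ℕ) = β ^ (i₂ : ℕ) :=
      hinj2 _ _ (fun j => (h1 j).trans (h2 j).symm)
    set βu : (AdjoinRoot gperp)ˣ := Units.mk0 β hβ0 with hβudef
    have hordβu : orderOf βu = n := by
      rw [← orderOf_units (y := βu)]
      show orderOf β = n
      rw [← hordαβ, hord]
    have hββu : βu ^ (i₁ : ℕ) = βu ^ (i₂ : ℕ) := by
      apply Units.ext
      rw [Units.val_pow_eq_pow_val, Units.val_pow_eq_pow_val]
      exact hββ
    have hmod := pow_eq_pow_iff_modEq.mp hββu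
    rw [hordβu] at hmod
    have hmod' : (i₁ : ℕ) % n = (i₂ : ℕ) % n := hmod
    rw [Nat.mod_eq_of_lt i₁.isLt, Nat.mod_eq_of_lt i₂.isLt] at hmod'
    exact Fin.ext hmod'
  constructor
  · -- primitive implies de Bruijn-type window property
    intro hord v hv
    obtain ⟨z, hz⟩ := hΨsurj v
    have hz0 : z ≠ 0 := by
      rintro rfl
      rw [map_zero] at hz
      exact hv hz.symm
    set βu : (AdjoinRoot gperp)ˣ := Units.mk0 β hβ0 with hβudef
    have hordβu : orderOf βu = n := by
      rw [← orderOf_units (y := βu)]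
      show orderOf β = n
      rw [← hordαβ, hord]
    have htop : Subgroup.zpowers βu = ⊤ := by
      apply Subgroup.eq_top_of_card_eq
      rw [Nat.card_zpowers, hordβu, Nat.card_eq_fintype_card, hcardKx]
    have hmem : Units.mk0 z hz0 ∈ Subgroup.zpowers βu := by
      rw [htop]
      exact Subgroup.mem_top _
    rw [← mem_powers_iff_mem_zpowers] at hmem
    obtain ⟨m, hm⟩ := hmem
    have hβm : β ^ m = z := by
      have := congrArg Units.val hm
      rw [Units.val_pow_eq_pow_val] at this
      exact this
    have hβmn : β ^ (m % n) = β ^ m := by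
      conv_rhs => rw [← Nat.div_add_mod m n]
      rw [pow_add, pow_mul, hβn, one_pow, one_mul]
    set i0 : Fin n := ⟨m % n, Nat.mod_lt _ (by omega : 0 < n)⟩ with hi0def
    have hprop : ∀ j : Fin k, φ (β ^ (j : ℕ) * β ^ ((i0 : ℕ))) = v j := by
      intro j
      show φ (β ^ (j : ℕ) * β ^ (m % n)) = v j
      rw [hβmn, hβm, ← hΨapp, hz]
    refine ⟨i0, (hwin_iff i0 v).mpr hprop, ?_⟩
    intro y hy
    exact huniq v y i0 hord ((hwin_iff y v).mp hy) hprop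
  · -- window property implies primitivity
    intro hwin
    have hford : IsOfFinOrder α :=
      isOfFinOrder_iff_pow_eq_one.mpr ⟨n, by omega, hαn⟩
    have hd_dvd : orderOf α ∣ n := orderOf_dvd_of_pow_eq_one hαn
    have hdpos : 0 < orderOf α := hford.orderOf_pos
    by_contra hne
    have hdlt : orderOf α < n :=
      lt_of_le_of_ne (Nat.le_of_dvd (by omega) hd_dvd) hne
    have hβd : β ^ (orderOf α) = 1 := by
      rw [hβdef, inv_pow, pow_orderOf_eq_one, inv_one]
    set v : Fin k → F := fun j => φ (β ^ (j : ℕ)) with hvdef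
    have hv0 : v ≠ 0 := by
      intro hv
      have h1 : (1 : AdjoinRoot gperp) = 0 := by
        apply hker 1
        intro j
        rw [mul_one]
        exact congrFun hv j
      exact one_ne_zero h1
    obtain ⟨i, hi, hiu⟩ := hwin v hv0
    have e0 : (⟨0, by omega⟩ : Fin n) = i := by
      apply hiu
      apply (hwin_iff _ v).mpr
      intro j
      show φ (β ^ (j : ℕ) * β ^ (0 : ℕ)) = v j
      rw [pow_zero, mul_one]
    have ed : (⟨orderOf α, hdlt⟩ : Fin n) = i := by
      apply hiu
      apply (hwin_iff _ v).mpr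
      intro j
      show φ (β ^ (j : ℕ) * β ^ (orderOf α)) = v j
      rw [hβd, mul_one]
    rw [← e0] at ed
    have : orderOf α = 0 := (Fin.mk.injEq _ _ _ _).mp ed
    omega
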